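/- Let (a_j)_{j≥0} be a nonnegative sequence with ∑_{j≥0} a_j ≤ 1 and ∑_{j≥0} min(j,n)·a_j → ∞ as n → ∞. For k ∈ ℤ and n ∈ ℕ set A_{n,k} = ∑_{j=max(0,k-n)}^{k-1} a_j (with A_{n,k}=0 for k ≤ 0). Then ∑_{k>n} A_{n,k}² = o(∑_{j≥0} min(j,n)·a_j) as n → ∞. -/

import Mathlib

open Filter

lemma ico_sum_le_tail (a : ℕ → ℝ) (hpos : ∀ j, 0 ≤ a j) (hs : Summable a)
    (n m : ℕ) : (∑ j ∈ Finset.Ico m (m + n), a j) ≤ ∑' j, a (j + m) := by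
  have h1 : (∑ j ∈ Finset.Ico m (m + n), a j) = ∑ i ∈ Finset.range n, a (i + m) := by
    rw [Finset.sum_Ico_eq_sum_range]
    simp only [Nat.add_sub_cancel_left]
    exact Finset.sum_congr rfl fun i _ => by rw [add_comm]
  rw [h1]
  exact Summable.sum_le_tsum _ (fun i _ => hpos _) ((summable_nat_add_iff m).2 hs)

lemma summable_B (a : ℕ → ℝ) (hs : Summable a) (n : ℕ) :
    Summable (fun m : ℕ => ∑ j ∈ Finset.Ico (m+1) (m+1+n), a j) := by
  have h : ∀ m : ℕ, (∑ j ∈ Finset.Ico (m+1) (m+1+n), a j)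
      = ∑ i ∈ Finset.range n, a (m + (1+i)) := by
    intro m
    rw [Finset.sum_Ico_eq_sum_range]
    simp only [Nat.add_sub_cancel_left]
    exact Finset.sum_congr rfl fun i _ => by ring_nf
  simp only [h]
  exact summable_sum fun i _ => (summable_nat_add_iff (1+i)).2 hs

lemma summable_min (a : ℕ → ℝ) (hpos : ∀ j, 0 ≤ a j) (hs : Summable a) (n : ℕ) :
    Summable (fun j : ℕ => (min j n : ℝ) * a j) := by
  refine Summable.of_nonneg_of_le (fun j => mul_nonneg (by positivity) (hpos j))
    (fun j => ?_) (hs.mul_left (n : ℝ))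
  exact mul_le_mul_of_nonneg_right (by exact_mod_cast min_le_right j n) (hpos j)

lemma tsum_B_le (a : ℕ → ℝ) (hpos : ∀ j, 0 ≤ a j) (hs : Summable a) (n : ℕ) :
    (∑' m : ℕ, ∑ j ∈ Finset.Ico (m+1) (m+1+n), a j) ≤ ∑' j : ℕ, (min j n : ℝ) * a j := by
  refine Summable.tsum_le_of_sum_le (summable_B a hs n) fun s => ?_
  obtain ⟨M, hM⟩ : ∃ M, s ⊆ Finset.range M :=
    ⟨(s.sup id)+1, fun x hx => Finset.mem_range.2 (Nat.lt_succ_of_le (Finset.le_sup (f := id) hx))⟩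
  calc ∑ m ∈ s, ∑ j ∈ Finset.Ico (m+1) (m+1+n), a j
      ≤ ∑ m ∈ Finset.range M, ∑ j ∈ Finset.Ico (m+1) (m+1+n), a j :=
        Finset.sum_le_sum_of_subset_of_nonneg hM
          (fun i _ _ => Finset.sum_nonneg fun j _ => hpos j)
    _ ≤ ∑ j ∈ Finset.range (M+n+1), (min j n : ℝ) * a j := ?_
    _ ≤ ∑' j : ℕ, (min j n : ℝ) * a j :=
        Summable.sum_le_tsum _ (fun j _ => mul_nonneg (by positivity) (hpos j)) (summable_min a hpos hs n)
  have key : ∀ m ∈ Finset.range M, (∑ j ∈ Finset.Ico (m+1) (m+1+n), a j)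
      = ∑ j ∈ Finset.range (M+n+1), if j ∈ Finset.Ico (m+1) (m+1+n) then a j else 0 := by
    intro m hm
    rw [Finset.sum_ite_mem, Finset.inter_eq_right.2]
    intro j hj
    simp only [Finset.mem_Ico] at hj
    simp only [Finset.mem_range] at hm ⊢
    omega
  rw [Finset.sum_congr rfl key, Finset.sum_comm]
  apply Finset.sum_le_sum
  intro j _
  rw [← Finset.sum_filter, Finset.sum_const, nsmul_eq_mul]
  refine mul_le_mul_of_nonneg_right ?_ (hpos j)
  have hsub : (Finset.range M).filter (fun m => j ∈ Finset.Ico (m+1) (m+1+n))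
      ⊆ Finset.Ico (j - n) j := by
    intro m hm
    simp only [Finset.mem_filter, Finset.mem_range, Finset.mem_Ico] at hm ⊢
    omega
  have hcard := Finset.card_le_card hsub
  rw [Nat.card_Ico] at hcard
  exact_mod_cast hcard.trans_eq (by omega)

lemma hnum_aux (a : ℕ → ℝ) (n : ℕ) :
    (∑' k : {k : ℕ // n < k}, (∑ j ∈ Finset.Ico ((k : ℕ) - n) (k : ℕ), a j) ^ 2)
      = ∑' m : ℕ, (∑ j ∈ Finset.Ico (m+1) (m+1+n), a j) ^ 2 := by
  rw [← Equiv.tsum_eq (show ℕ ≃ {k : ℕ // n < k} from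
    { toFun := fun m => ⟨m + 1 + n, by omega⟩
      invFun := fun k => (k : ℕ) - n - 1
      left_inv := fun m => by show m + 1 + n - n - 1 = m; omega
      right_inv := fun k => by
        ext
        show (k : ℕ) - n - 1 + 1 + n = (k : ℕ)
        have := k.2
        omega })]
  apply tsum_congr
  intro m
  simp only [Equiv.coe_fn_mk]
  have h2 : m + 1 + n - n = m + 1 := by omega
  rw [h2]

lemma key_bound (a : ℕ → ℝ) (hpos : ∀ j, 0 ≤ a j) (hsummable : Summable a)
    (hsum1 : ∑' j : ℕ, a j ≤ 1) (n L : ℕ) (ε3 : ℝ) (hε3 : 0 ≤ ε3)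
    (B : ℕ → ℝ) (hBdef : ∀ l, B l = ∑ j ∈ Finset.Ico l (l + n), a j)
    (hTL : ∀ l ≥ L, (∑' j : ℕ, a (j + l)) ≤ ε3) :
    (∑' m : ℕ, (B (m+1)) ^ 2) ≤ (L : ℝ) + ε3 * ∑' j : ℕ, (min j n : ℝ) * a j := by
  have hT1 : ∀ l : ℕ, (∑' j : ℕ, a (j + l)) ≤ 1 := by
    intro l
    refine le_trans ?_ hsum1
    exact Summable.tsum_le_tsum_of_inj (fun j => j + l) (add_left_injective l)
      (fun c _ => hpos c) (fun j => le_refl _) ((summable_nat_add_iff l).2 hsummable) hsummable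
  have hBnonneg : ∀ l, 0 ≤ B l := fun l => by
    rw [hBdef]; exact Finset.sum_nonneg fun j _ => hpos j
  have hB_le_T : ∀ l, B l ≤ ∑' j : ℕ, a (j + l) := fun l => by
    rw [hBdef]; exact ico_sum_le_tail a hpos hsummable n l
  have hB1 : ∀ l, B l ≤ 1 := fun l => (hB_le_T l).trans (hT1 l)
  have Sb : Summable (fun m : ℕ => B (m+1)) := by
    simp only [hBdef]; exact summable_B a hsummable n
  have Sf : Summable (fun m : ℕ => (B (m+1)) ^ 2) := by
    refine Summable.of_nonneg_of_le (fun m => sq_nonneg _) (fun m => ?_) Sb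
    nlinarith [hBnonneg (m+1), hB1 (m+1)]
  have step3 : (∑' m : ℕ, B (m + 1)) ≤ ∑' j : ℕ, (min j n : ℝ) * a j := by
    simp only [hBdef]; exact tsum_B_le a hpos hsummable n
  have hhead : ∑ i ∈ Finset.range L, (B (i+1)) ^ 2 ≤ (L : ℝ) := by
    calc ∑ i ∈ Finset.range L, (B (i+1)) ^ 2 ≤ ∑ i ∈ Finset.range L, (1:ℝ) :=
          Finset.sum_le_sum fun i _ => by nlinarith [hBnonneg (i+1), hB1 (i+1)]
      _ = (L : ℝ) := by simp
  have htail2 : (∑' m : ℕ, (B (m + L + 1)) ^ 2)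
      ≤ ε3 * ∑' j : ℕ, (min j n : ℝ) * a j := by
    have step1 : (∑' m : ℕ, (B (m + L + 1)) ^ 2) ≤ ∑' m : ℕ, ε3 * B (m + L + 1) := by
      refine Summable.tsum_le_tsum (fun m => ?_) ((summable_nat_add_iff L).2 Sf)
        (((summable_nat_add_iff L).2 Sb).mul_left ε3)
      have h1 := hB_le_T (m + L + 1)
      have h2 := hTL (m + L + 1) (by omega)
      nlinarith [hBnonneg (m + L + 1)]
    have step2 : (∑' m : ℕ, B (m + L + 1)) ≤ ∑' m : ℕ, B (m + 1) := by
      have hs2 := Summable.sum_add_tsum_nat_add L Sb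
      have hnn : 0 ≤ ∑ i ∈ Finset.range L, B (i+1) :=
        Finset.sum_nonneg fun i _ => hBnonneg _
      linarith
    calc (∑' m : ℕ, (B (m + L + 1)) ^ 2) ≤ ∑' m : ℕ, ε3 * B (m + L + 1) := step1
      _ = ε3 * ∑' m : ℕ, B (m + L + 1) := tsum_mul_left
      _ ≤ ε3 * ∑' j : ℕ, (min j n : ℝ) * a j :=
          mul_le_mul_of_nonneg_left (step2.trans step3) hε3
  have hsplit := Summable.sum_add_tsum_nat_add L Sf
  linarith [hhead, htail2]

theorem stmt8 (a : ℕ → ℝ) (hpos : ∀ j, 0 ≤ a j) (hsummable : Summable a)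
    (hsum1 : ∑' j : ℕ, a j ≤ 1)
    (hdiv : Tendsto (fun n : ℕ => ∑' j : ℕ, (min j n : ℝ) * a j) atTop atTop) :
    Tendsto (fun n : ℕ =>
        (∑' k : {k : ℕ // n < k}, (∑ j ∈ Finset.Ico ((k : ℕ) - n) (k : ℕ), a j) ^ 2) /
          ∑' j : ℕ, (min j n : ℝ) * a j) atTop (nhds 0) := by
  have hTnonneg : ∀ l : ℕ, 0 ≤ ∑' j : ℕ, a (j + l) := fun l => tsum_nonneg fun j => hpos _
  simp only [hnum_aux a]
  rw [Metric.tendsto_atTop]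
  intro ε hε
  have htail : Tendsto (fun l : ℕ => ∑' j : ℕ, a (j + l)) atTop (nhds 0) := tendsto_sum_nat_add a
  obtain ⟨L, hL⟩ := (Metric.tendsto_atTop.1 htail) (ε/3) (by positivity)
  have hL' : ∀ l ≥ L, (∑' j : ℕ, a (j + l)) ≤ ε / 3 := by
    intro l hl
    have := hL l hl
    rw [Real.dist_eq, sub_zero, abs_of_nonneg (hTnonneg l)] at this
    exact this.le
  obtain ⟨N₀, hN₀⟩ := (hdiv.eventually_ge_atTop (3 * ((L : ℝ) + 1) / ε)).exists_forall_of_atTop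
  refine ⟨N₀, fun n hn => ?_⟩
  have hDn : 3 * ((L : ℝ) + 1) / ε ≤ ∑' j : ℕ, (min j n : ℝ) * a j := hN₀ n hn
  have hDpos : (0:ℝ) < ∑' j : ℕ, (min j n : ℝ) * a j := lt_of_lt_of_le (by positivity) hDn
  have hNle : (∑' m : ℕ, (∑ j ∈ Finset.Ico (m+1) (m+1+n), a j) ^ 2)
      ≤ (L : ℝ) + ε / 3 * ∑' j : ℕ, (min j n : ℝ) * a j := by
    have h := key_bound a hpos hsummable hsum1 n L (ε/3) (by positivity)
      (fun l => ∑ j ∈ Finset.Ico l (l + n), a j) (fun l => rfl) hL'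
    exact h
  have hNnonneg : 0 ≤ ∑' m : ℕ, (∑ j ∈ Finset.Ico (m+1) (m+1+n), a j) ^ 2 :=
    tsum_nonneg fun m => sq_nonneg _
  show dist ((∑' m : ℕ, (∑ j ∈ Finset.Ico (m+1) (m+1+n), a j) ^ 2) /
      ∑' j : ℕ, (min j n : ℝ) * a j) 0 < ε
  rw [Real.dist_eq, sub_zero, abs_of_nonneg (div_nonneg hNnonneg hDpos.le)]
  rw [div_lt_iff₀ hDpos]
  have h2' : 3 * ((L : ℝ) + 1) ≤ (∑' j : ℕ, (min j n : ℝ) * a j) * ε := (div_le_iff₀ hε).1 hDn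
  nlinarith
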